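/- arXiv:2604.06908 — 4 statements merged into one kernel-verified Lean document; each statement's English description precedes it below -/
import Mathlib

section
/- Let ρ and σ be density matrices on ℂ^n with range(ρ) ⊆ range(σ). Then as α → 0 from the right (with 0 < α < 1), the quantum relative α-entropy S_α(ρ‖σ) tends to log(rank σ) − log(rank ρ), i.e., lim_{α→0⁺} S_α(ρ‖σ) = log( Tr(Π_σ) / Tr(Π_ρ) ), where Π_ρ and Π_σ are the orthogonal projections onto range(ρ) and range(σ), so that Tr(Π_ρ) = rank ρ and Tr(Π_σ) = rank σ. -/
open Matrix ComplexOrder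

/-- Real power of a Hermitian matrix via its spectral decomposition:
`A ^ r = ∑ i, (λ i) ^ r |x i⟩⟨x i|` (and `0` if `A` is not Hermitian). -/
noncomputable def mRpow {m : Type*} [Fintype m] [DecidableEq m]
    (A : Matrix m m ℂ) (r : ℝ) : Matrix m m ℂ :=
  if hA : A.IsHermitian then
    (hA.eigenvectorUnitary : Matrix m m ℂ) *
      Matrix.diagonal (fun i => ((hA.eigenvalues i ^ r : ℝ) : ℂ)) *
      star (hA.eigenvectorUnitary : Matrix m m ℂ)
  else 0

/-- The quantum relative α-entropy
`S_α(ρ‖σ) = (α/(1−α))·log Tr(ρ σ^{α−1}) − (1/(1−α))·log Tr(ρ^α) + log Tr(σ^α)`. -/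
noncomputable def Salpha {m : Type*} [Fintype m] [DecidableEq m]
    (α : ℝ) (ρ σ : Matrix m m ℂ) : ℝ :=
  α / (1 - α) * Real.log ((ρ * mRpow σ (α - 1)).trace.re)
    - 1 / (1 - α) * Real.log ((mRpow ρ α).trace.re)
    + Real.log ((mRpow σ α).trace.re)

/-- The orthogonal projection `Π_A` onto the range (support) of a Hermitian matrix,
via its spectral decomposition (and `0` if `A` is not Hermitian). -/
noncomputable def suppProj {m : Type*} [Fintype m] [DecidableEq m]
    (A : Matrix m m ℂ) : Matrix m m ℂ :=
  if hA : A.IsHermitian then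
    (hA.eigenvectorUnitary : Matrix m m ℂ) *
      Matrix.diagonal (fun i => if hA.eigenvalues i = 0 then (0 : ℂ) else 1) *
      star (hA.eigenvectorUnitary : Matrix m m ℂ)
  else 0

/- ## auxiliary lemmas -/
lemma trace_unitary_conj_diag {m : Type*} [Fintype m] [DecidableEq m]
    (U : Matrix.unitaryGroup m ℂ) (d : m → ℂ) :
    ((U : Matrix m m ℂ) * Matrix.diagonal d * star (U : Matrix m m ℂ)).trace = ∑ i, d i := by
  rw [Matrix.trace_mul_cycle, Matrix.UnitaryGroup.star_mul_self U,
    Matrix.one_mul, Matrix.trace_diagonal]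

lemma trace_mul_unitary_conj_diag {m : Type*} [Fintype m] [DecidableEq m]
    (ρ : Matrix m m ℂ) (U : Matrix.unitaryGroup m ℂ) (d : m → ℂ) :
    (ρ * ((U : Matrix m m ℂ) * Matrix.diagonal d * star (U : Matrix m m ℂ))).trace
      = ∑ j, (star (U : Matrix m m ℂ) * ρ * (U : Matrix m m ℂ)) j j * d j := by
  rw [← Matrix.mul_assoc, ← Matrix.mul_assoc, Matrix.trace_mul_cycle]
  rw [show star (U : Matrix m m ℂ) * (ρ * ↑U) * Matrix.diagonal d
      = (star (U : Matrix m m ℂ) * ρ * ↑U) * Matrix.diagonal d by simp only [Matrix.mul_assoc]]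
  rw [Matrix.trace]
  simp [Matrix.mul_diagonal, Matrix.diag]

lemma psd_diag_entry {m : Type*} [Fintype m] [DecidableEq m]
    {M : Matrix m m ℂ} (hM : M.PosSemidef) (j : m) : 0 ≤ M j j := by
  have := hM.dotProduct_mulVec_nonneg (Pi.single j 1)
  simpa [dotProduct, Matrix.mulVec, Pi.single_apply] using this

lemma conj_entry_dot {m : Type*} [Fintype m] [DecidableEq m] (M U : Matrix m m ℂ) (j : m) :
    (star U * M * U) j j = star (fun k => U k j) ⬝ᵥ (M *ᵥ fun k => U k j) := by
  simp only [Matrix.mul_apply, dotProduct, Matrix.mulVec, Matrix.star_apply,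
    dotProduct, Pi.star_apply, Finset.sum_mul, Finset.mul_sum]
  rw [Finset.sum_comm]
  congr 1; ext k; congr 1; ext l; ring

lemma mRpow_trace_re {m : Type*} [Fintype m] [DecidableEq m]
    {A : Matrix m m ℂ} (hA : A.IsHermitian) (r : ℝ) :
    (mRpow A r).trace.re = ∑ i, (hA.eigenvalues i) ^ r := by
  rw [mRpow, dif_pos hA, trace_unitary_conj_diag, ← Complex.ofReal_sum]
  exact Complex.ofReal_re _

lemma sum_indicator_eq_rank {m : Type*} [Fintype m] [DecidableEq m]
    {A : Matrix m m ℂ} (hA : A.IsHermitian) :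
    ∑ i, (if hA.eigenvalues i = 0 then (0:ℝ) else 1) = (A.rank : ℝ) := by
  rw [hA.rank_eq_card_non_zero_eigs]
  have h1 : ∀ i, (if hA.eigenvalues i = 0 then (0:ℝ) else 1)
      = (if hA.eigenvalues i ≠ 0 then (1:ℝ) else 0) := by
    intro i; by_cases h : hA.eigenvalues i = 0 <;> simp [h]
  simp_rw [h1]
  rw [Finset.sum_boole, Fintype.card_subtype]

lemma suppProj_trace {m : Type*} [Fintype m] [DecidableEq m]
    {A : Matrix m m ℂ} (hA : A.IsHermitian) :
    (suppProj A).trace = (A.rank : ℂ) := by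
  rw [suppProj, dif_pos hA, trace_unitary_conj_diag, hA.rank_eq_card_non_zero_eigs]
  have h1 : ∀ i, (if hA.eigenvalues i = 0 then (0:ℂ) else 1)
      = (if hA.eigenvalues i ≠ 0 then (1:ℂ) else 0) := by
    intro i; by_cases h : hA.eigenvalues i = 0 <;> simp [h]
  simp_rw [h1]
  rw [Finset.sum_boole, Fintype.card_subtype]

lemma trace_re_eq_sum_eigenvalues {m : Type*} [Fintype m] [DecidableEq m]
    {A : Matrix m m ℂ} (hA : A.IsHermitian) :
    A.trace.re = ∑ i, hA.eigenvalues i := by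
  conv_lhs => rw [hA.spectral_theorem]
  rw [Unitary.conjStarAlgAut_apply]
  rw [trace_unitary_conj_diag]
  rw [show ∑ i, (RCLike.ofReal ∘ hA.eigenvalues) i = ((∑ i, hA.eigenvalues i : ℝ) : ℂ) by
    rw [Complex.ofReal_sum]; rfl]
  exact Complex.ofReal_re _

open Topology in
/-- If `range(ρ) ⊆ range(σ)`, then as `α → 0⁺`,
`S_α(ρ‖σ) → log(Tr Π_σ / Tr Π_ρ) = log(rank σ) − log(rank ρ)`. -/
theorem Salpha_tendsto_zero {n : ℕ}
    (ρ σ : Matrix (Fin n) (Fin n) ℂ)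
    (hρ : ρ.PosSemidef) (hρ1 : ρ.trace = 1)
    (hσ : σ.PosSemidef) (hσ1 : σ.trace = 1)
    (hsupp : LinearMap.range (Matrix.toEuclideanLin ρ) ≤
      LinearMap.range (Matrix.toEuclideanLin σ)) :
    Filter.Tendsto (fun α => Salpha α ρ σ) (𝓝[>] (0 : ℝ))
      (𝓝 (Real.log ((σ.rank : ℝ)) - Real.log ((ρ.rank : ℝ)))) ∧
    (suppProj ρ).trace = (ρ.rank : ℂ) ∧ (suppProj σ).trace = (σ.rank : ℂ) := by
  have hρh : ρ.IsHermitian := hρ.1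
  have hσh : σ.IsHermitian := hσ.1
  refine ⟨?_, suppProj_trace hρh, suppProj_trace hσh⟩
  set lam := hρh.eigenvalues with hlam
  set μ := hσh.eigenvalues with hmu
  set U : Matrix (Fin n) (Fin n) ℂ := (hσh.eigenvectorUnitary : Matrix (Fin n) (Fin n) ℂ)
    with hU
  set M : Matrix (Fin n) (Fin n) ℂ := star U * ρ * U with hMdef
  set c : Fin n → ℝ := fun j => (M j j).re with hc
  -- basic positivity facts
  have hMpsd : M.PosSemidef := by
    have := hρ.conjTranspose_mul_mul_same U
    rwa [← Matrix.star_eq_conjTranspose] at this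
  have hMjj : ∀ j, 0 ≤ M j j := fun j => psd_diag_entry hMpsd j
  have hcnn : ∀ j, 0 ≤ c j := fun j => (Complex.nonneg_iff.mp (hMjj j)).1
  have hMc : ∀ j, M j j = (c j : ℂ) := by
    intro j
    have h2 := Complex.nonneg_iff.mp (hMjj j)
    exact Complex.ext rfl (by simp [← h2.2])
  -- sum of c equals 1
  have hsumc : ∑ j, c j = 1 := by
    have hUU : U * star U = 1 := (Matrix.mem_unitaryGroup_iff).mp hσh.eigenvectorUnitary.2
    have ht : M.trace = 1 := by
      rw [hMdef, Matrix.trace_mul_cycle, hUU, Matrix.one_mul, hρ1]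
    have h9 := congrArg Complex.re ht
    rw [Matrix.trace, Complex.re_sum] at h9
    simpa [Matrix.diag] using h9
  -- eigenvalue facts
  have hμnn : ∀ j, 0 ≤ μ j := hσ.eigenvalues_nonneg
  have hlnn : ∀ i, 0 ≤ lam i := hρ.eigenvalues_nonneg
  have hsumμ : ∑ j, μ j = 1 := by
    have := trace_re_eq_sum_eigenvalues hσh
    rw [hσ1] at this; simpa using this.symm
  have hsuml : ∑ i, lam i = 1 := by
    have := trace_re_eq_sum_eigenvalues hρh
    rw [hρ1] at this; simpa using this.symm
  have hμle1 : ∀ j, μ j ≤ 1 := by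
    intro j
    rw [← hsumμ]
    exact Finset.single_le_sum (fun i _ => hμnn i) (Finset.mem_univ j)
  -- support: c j = 0 when μ j = 0
  have hmv : ∀ x : Fin n → ℂ, ∃ y : Fin n → ℂ, σ *ᵥ y = ρ *ᵥ x := by
    intro x
    obtain ⟨v, hv⟩ := hsupp (LinearMap.mem_range_self (Matrix.toEuclideanLin ρ)
      ((WithLp.equiv 2 (Fin n → ℂ)).symm x))
    refine ⟨WithLp.equiv 2 (Fin n → ℂ) v, ?_⟩
    have h2 := congrArg (WithLp.equiv 2 (Fin n → ℂ)) hv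
    change Matrix.toLin' σ _ = Matrix.toLin' ρ _ at h2
    simpa [Matrix.toLin'_apply] using h2
  have hker : ∀ v : Fin n → ℂ, σ *ᵥ v = 0 → star v ⬝ᵥ (ρ *ᵥ v) = 0 := by
    intro v hv
    obtain ⟨w, hw⟩ := hmv v
    rw [← hw, Matrix.dotProduct_mulVec]
    have h3 : star v ᵥ* σ = 0 := by
      have h4 : star (σ *ᵥ v) = star v ᵥ* σᴴ := Matrix.star_mulVec σ v
      rw [hσh.eq] at h4
      rw [← h4, hv, star_zero]
    rw [h3, zero_dotProduct]
  have hc0 : ∀ j, μ j = 0 → c j = 0 := by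
    intro j hj
    have hy : σ *ᵥ ⇑(hσh.eigenvectorBasis j) = 0 := by
      rw [hσh.mulVec_eigenvectorBasis, ← hmu, hj, zero_smul]
    have h5 : (fun k => U k j) = ⇑(hσh.eigenvectorBasis j) := by
      funext k; rw [hU]; exact hσh.eigenvectorUnitary_apply k j
    have h6 : M j j = 0 := by
      rw [hMdef, conj_entry_dot, h5]
      exact hker _ hy
    show (M j j).re = 0
    rw [h6, Complex.zero_re]
  -- trace formulas
  have E2 : ∀ α : ℝ, (ρ * mRpow σ (α - 1)).trace.re = ∑ j, c j * μ j ^ (α - 1) := by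
    intro α
    rw [mRpow, dif_pos hσh, trace_mul_unitary_conj_diag, Complex.re_sum]
    refine Finset.sum_congr rfl fun j _ => ?_
    rw [show (star (hσh.eigenvectorUnitary : Matrix (Fin n) (Fin n) ℂ) * ρ *
        (hσh.eigenvectorUnitary : Matrix (Fin n) (Fin n) ℂ)) j j = M j j from rfl, hMc j,
      ← Complex.ofReal_mul]
    exact Complex.ofReal_re _
  -- the scalar functions
  set g : ℝ → ℝ := fun α => ∑ j, c j * μ j ^ (α - 1) with hg
  set h : ℝ → ℝ := fun α => ∑ i, lam i ^ α with hh
  set k : ℝ → ℝ := fun α => ∑ j, μ j ^ α with hk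
  have hSal : ∀ α : ℝ, Salpha α ρ σ
      = α / (1 - α) * Real.log (g α) - 1 / (1 - α) * Real.log (h α) + Real.log (k α) := by
    intro α
    rw [Salpha, E2 α, mRpow_trace_re hρh α, mRpow_trace_re hσh α]
  -- limits of the scalar functions
  have hpow_lim : ∀ (e : Fin n → ℝ), (∀ i, 0 ≤ e i) →
      Filter.Tendsto (fun α : ℝ => ∑ i, e i ^ α) (𝓝[>] (0:ℝ))
        (𝓝 (∑ i, if e i = 0 then (0:ℝ) else 1)) := by
    intro e he
    refine tendsto_finset_sum _ fun i _ => ?_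
    by_cases hi : e i = 0
    · rw [if_pos hi, hi]
      refine Filter.Tendsto.congr' ?_ tendsto_const_nhds
      filter_upwards [self_mem_nhdsWithin] with α hα
      exact (Real.zero_rpow (ne_of_gt hα)).symm
    · rw [if_neg hi]
      have := (Real.continuousAt_const_rpow (a := e i) (b := 0) hi).tendsto
      rw [Real.rpow_zero] at this
      exact this.mono_left nhdsWithin_le_nhds
  have Lh : Filter.Tendsto h (𝓝[>] (0:ℝ)) (𝓝 ((ρ.rank : ℝ))) := by
    rw [← sum_indicator_eq_rank hρh]
    exact hpow_lim lam hlnn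
  have Lk : Filter.Tendsto k (𝓝[>] (0:ℝ)) (𝓝 ((σ.rank : ℝ))) := by
    rw [← sum_indicator_eq_rank hσh]
    exact hpow_lim μ hμnn
  set C : ℝ := ∑ j, c j * μ j ^ (-1 : ℝ) with hC
  have Lg : Filter.Tendsto g (𝓝[>] (0:ℝ)) (𝓝 C) := by
    refine tendsto_finset_sum _ fun j _ => ?_
    by_cases hj : μ j = 0
    · rw [hc0 j hj]
      simp only [zero_mul]
      exact tendsto_const_nhds
    · have ha : Filter.Tendsto (fun α : ℝ => α - 1) (𝓝[>] (0:ℝ)) (𝓝 (-1 : ℝ)) := by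
        have h1 : Filter.Tendsto (fun α : ℝ => α - 1) (𝓝 (0:ℝ)) (𝓝 ((0:ℝ) - 1)) :=
          Filter.Tendsto.sub_const Filter.tendsto_id 1
        simp only [zero_sub] at h1
        exact h1.mono_left nhdsWithin_le_nhds
      have hb : Filter.Tendsto (fun x : ℝ => μ j ^ x) (𝓝 (-1 : ℝ)) (𝓝 (μ j ^ (-1:ℝ))) :=
        (Real.continuousAt_const_rpow hj).tendsto
      exact (hb.comp ha).const_mul (c j)
  have hC1 : 1 ≤ C := by
    calc (1:ℝ) = ∑ j, c j := hsumc.symm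
      _ ≤ ∑ j, c j * μ j ^ (-1:ℝ) := by
          refine Finset.sum_le_sum fun j _ => ?_
          by_cases hj : μ j = 0
          · rw [hc0 j hj]; simp
          · have hμpos : 0 < μ j := lt_of_le_of_ne (hμnn j) (Ne.symm hj)
            have hinv : (1:ℝ) ≤ μ j ^ (-1:ℝ) := by
              rw [Real.rpow_neg_one]
              simpa using one_le_inv₀ hμpos |>.mpr <| id (hμle1 j)
            nlinarith [hcnn j]
      _ = C := hC.symm
  -- rank positivity
  have hrankρ : (0:ℝ) < (ρ.rank : ℝ) := by
    have : ∃ i, lam i ≠ 0 := by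
      by_contra hcon
      push_neg at hcon
      rw [Finset.sum_congr rfl (fun i _ => hcon i)] at hsuml
      simp at hsuml
    obtain ⟨i, hi⟩ := this
    have : 0 < ρ.rank := by
      rw [hρh.rank_eq_card_non_zero_eigs]
      exact Fintype.card_pos_iff.mpr ⟨⟨i, hi⟩⟩
    exact_mod_cast this
  have hrankσ : (0:ℝ) < (σ.rank : ℝ) := by
    have : ∃ j, μ j ≠ 0 := by
      by_contra hcon
      push_neg at hcon
      rw [Finset.sum_congr rfl (fun j _ => hcon j)] at hsumμ
      simp at hsumμ
    obtain ⟨j, hj⟩ := this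
    have : 0 < σ.rank := by
      rw [hσh.rank_eq_card_non_zero_eigs]
      exact Fintype.card_pos_iff.mpr ⟨⟨j, hj⟩⟩
    exact_mod_cast this
  -- assemble the limit
  have T0 : Filter.Tendsto (fun α : ℝ => α / (1 - α)) (𝓝[>] (0:ℝ)) (𝓝 0) := by
    have hcont : ContinuousAt (fun α : ℝ => α / (1 - α)) 0 :=
      ContinuousAt.div continuousAt_id (by fun_prop) (by norm_num)
    have := hcont.tendsto
    simp only [id, zero_div, sub_zero, div_one] at this
    exact this.mono_left nhdsWithin_le_nhds
  have T1 : Filter.Tendsto (fun α : ℝ => 1 / (1 - α)) (𝓝[>] (0:ℝ)) (𝓝 1) := by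
    have hcont : ContinuousAt (fun α : ℝ => 1 / (1 - α)) 0 :=
      ContinuousAt.div continuousAt_const (by fun_prop) (by norm_num)
    have := hcont.tendsto
    simp only [sub_zero, div_one] at this
    exact this.mono_left nhdsWithin_le_nhds
  have Tlg : Filter.Tendsto (fun α => Real.log (g α)) (𝓝[>] (0:ℝ)) (𝓝 (Real.log C)) :=
    ((Real.continuousAt_log (by linarith)).tendsto).comp Lg
  have Tlh : Filter.Tendsto (fun α => Real.log (h α)) (𝓝[>] (0:ℝ))
      (𝓝 (Real.log (ρ.rank : ℝ))) :=
    ((Real.continuousAt_log (ne_of_gt hrankρ)).tendsto).comp Lh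
  have Tlk : Filter.Tendsto (fun α => Real.log (k α)) (𝓝[>] (0:ℝ))
      (𝓝 (Real.log (σ.rank : ℝ))) :=
    ((Real.continuousAt_log (ne_of_gt hrankσ)).tendsto).comp Lk
  have Tfinal := ((T0.mul Tlg).sub (T1.mul Tlh)).add Tlk
  rw [show (0 * Real.log C - 1 * Real.log (ρ.rank : ℝ) + Real.log (σ.rank : ℝ))
    = Real.log (σ.rank : ℝ) - Real.log (ρ.rank : ℝ) by ring] at Tfinal
  refine Tfinal.congr fun α => ?_
  rw [hSal α]
end

section
/- Let σ be a positive definite density matrix on ℂ^n. Then σ = (1/n)·I_n if and only if for every density matrix ρ on ℂ^n one has Tr(Π_ρ σ) = rank(ρ) / rank(σ), where Π_ρ denotes the orthogonal projection onto range(ρ). Equivalently, the limit lim_{α→0⁺} S_α(ρ‖σ) = log(rank σ / rank ρ) coincides with the min-relative entropy D_min(ρ‖σ) = −log Tr(Π_ρ σ) for every density matrix ρ if and only if σ is maximally mixed. -/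
open Matrix ComplexOrder

section aux
variable {m : Type*} [Fintype m] [DecidableEq m]

lemma eig01 {ρ : Matrix m m ℂ} (hρ : ρ.IsHermitian) (hid : ρ * ρ = ρ) (i : m) :
    hρ.eigenvalues i = 0 ∨ hρ.eigenvalues i = 1 := by
  set v : m → ℂ := ⇑(hρ.eigenvectorBasis i) with hv
  set t := hρ.eigenvalues i with ht
  have hvne : v ≠ 0 := fun h => hρ.eigenvectorBasis.orthonormal.ne_zero i
    (by ext j; have := congrFun h j; simpa [hv] using this)
  have h1 : ρ *ᵥ v = t • v := hρ.mulVec_eigenvectorBasis i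
  have h2 : (t * t) • v = t • v := by
    have : ρ *ᵥ (ρ *ᵥ v) = ρ *ᵥ v := by rw [mulVec_mulVec, hid]
    rw [h1, mulVec_smul, h1, smul_smul] at this
    exact this
  have h3 : (t * t - t) • v = 0 := by rw [sub_smul, h2, sub_self]
  rcases smul_eq_zero.mp h3 with h | h
  · have : t * (t - 1) = 0 := by ring_nf; ring_nf at h; linarith
    rcases mul_eq_zero.mp this with h | h
    · exact Or.inl h
    · exact Or.inr (by linarith)
  · exact absurd h hvne

lemma suppProj_of_idem {ρ : Matrix m m ℂ} (hρ : ρ.IsHermitian) (hid : ρ * ρ = ρ) :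
    suppProj ρ = ρ := by
  rw [suppProj, dif_pos hρ]
  have hd : (fun i => if hρ.eigenvalues i = 0 then (0 : ℂ) else 1)
      = (fun i => (hρ.eigenvalues i : ℂ)) := by
    funext i
    rcases eig01 hρ hid i with h | h <;> simp [h]
  rw [hd]
  exact (hρ.spectral_theorem).symm

lemma suppProj_trace_s16 {ρ : Matrix m m ℂ} (hρ : ρ.IsHermitian) :
    (suppProj ρ).trace = (ρ.rank : ℂ) := by
  rw [suppProj, dif_pos hρ, trace_mul_cycle, Unitary.coe_star_mul_self, one_mul,
    hρ.rank_eq_card_non_zero_eigs, trace_diagonal, Fintype.card_subtype]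
  have : ∀ i, (if hρ.eigenvalues i = 0 then (0:ℂ) else 1)
      = if hρ.eigenvalues i ≠ 0 then 1 else 0 := by
    intro i; by_cases h : hρ.eigenvalues i = 0 <;> simp [h]
  simp only [this, Finset.sum_boole]

lemma trace_eq_sum_eigs {ρ : Matrix m m ℂ} (hρ : ρ.IsHermitian) :
    ρ.trace = ∑ i, (hρ.eigenvalues i : ℂ) := by
  conv_lhs => rw [hρ.spectral_theorem, Unitary.conjStarAlgAut_apply]
  rw [trace_mul_cycle, Unitary.coe_star_mul_self, one_mul, trace_diagonal]
  rfl

lemma rank_pos_of_trace_one {ρ : Matrix m m ℂ} (hρ : ρ.IsHermitian) (h1 : ρ.trace = 1) :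
    0 < ρ.rank := by
  rw [hρ.rank_eq_card_non_zero_eigs, Fintype.card_pos_iff]
  by_contra h
  rw [not_nonempty_iff] at h
  have hall : ∀ i, hρ.eigenvalues i = 0 := by
    intro i
    by_contra hi
    exact h.elim ⟨i, hi⟩
  rw [trace_eq_sum_eigs hρ] at h1
  simp [hall] at h1

/-- The outer-product density matrix built from a nonzero vector. -/
noncomputable def rhoX (x : m → ℂ) : Matrix m m ℂ :=
  ((∑ i, Complex.normSq (x i) : ℝ) : ℂ)⁻¹ • vecMulVec x (star x)

lemma dot_star_self (x : m → ℂ) :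
    star x ⬝ᵥ x = ((∑ i, Complex.normSq (x i) : ℝ) : ℂ) := by
  simp only [dotProduct, Pi.star_apply]
  push_cast
  exact Finset.sum_congr rfl fun i _ => (Complex.normSq_eq_conj_mul_self).symm

lemma normSq_sum_pos {x : m → ℂ} (hx : x ≠ 0) :
    0 < ∑ i, Complex.normSq (x i) := by
  obtain ⟨i, hi⟩ := Function.ne_iff.mp hx
  exact Finset.sum_pos' (fun j _ => Complex.normSq_nonneg _)
    ⟨i, Finset.mem_univ i, Complex.normSq_pos.mpr hi⟩

lemma vecMulVec_sq (x : m → ℂ) :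
    vecMulVec x (star x) * vecMulVec x (star x)
      = ((∑ i, Complex.normSq (x i) : ℝ) : ℂ) • vecMulVec x (star x) := by
  rw [← dot_star_self]
  ext i j
  simp only [mul_apply, vecMulVec_apply, Matrix.smul_apply, smul_eq_mul, dotProduct,
    Pi.star_apply, Finset.sum_mul]
  exact Finset.sum_congr rfl fun k _ => by ring

lemma vecMulVec_herm (x : m → ℂ) : (vecMulVec x (star x)).IsHermitian := by
  ext i j
  simp only [conjTranspose_apply, vecMulVec_apply, Pi.star_apply, star_mul', star_star]
  ring

lemma vecMulVec_trace (x : m → ℂ) :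
    (vecMulVec x (star x)).trace = ((∑ i, Complex.normSq (x i) : ℝ) : ℂ) := by
  rw [← dot_star_self]
  simp only [trace, diag_apply, vecMulVec_apply, dotProduct, Pi.star_apply]
  exact Finset.sum_congr rfl fun k _ => by ring

lemma vecMulVec_mul_trace (x : m → ℂ) (σ : Matrix m m ℂ) :
    (vecMulVec x (star x) * σ).trace = star x ⬝ᵥ σ *ᵥ x := by
  simp only [trace, diag_apply, mul_apply, vecMulVec_apply, dotProduct, mulVec,
    Pi.star_apply, Finset.mul_sum]
  rw [Finset.sum_comm]
  exact Finset.sum_congr rfl fun j _ => Finset.sum_congr rfl fun i _ => by ring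

lemma vecMulVec_psd (x : m → ℂ) : (vecMulVec x (star x)).PosSemidef := by
  refine PosSemidef.of_dotProduct_mulVec_nonneg (vecMulVec_herm x) fun y => ?_
  have : star y ⬝ᵥ (vecMulVec x (star x) *ᵥ y)
      = star (star x ⬝ᵥ y) * (star x ⬝ᵥ y) := by
    simp only [dotProduct, mulVec, vecMulVec_apply, Pi.star_apply, star_sum, star_mul',
      star_star, Finset.sum_mul, Finset.mul_sum]
    rw [Finset.sum_comm]
    exact Finset.sum_congr rfl fun j _ => Finset.sum_congr rfl fun i _ => by ring
  rw [this]
  exact star_mul_self_nonneg _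

lemma rhoX_psd (x : m → ℂ) : (rhoX x).PosSemidef := by
  refine PosSemidef.of_dotProduct_mulVec_nonneg ?_ fun y => ?_
  · unfold rhoX
    have := vecMulVec_herm x
    unfold IsHermitian at this ⊢
    rw [conjTranspose_smul, this]
    congr 1
    simp
  · have h := (posSemidef_iff_dotProduct_mulVec.mp (vecMulVec_psd x)).2 y
    unfold rhoX
    rw [smul_mulVec, dotProduct_smul, smul_eq_mul]
    refine mul_nonneg ?_ h
    rw [show (((∑ i, Complex.normSq (x i) : ℝ) : ℂ))⁻¹
        = (((∑ i, Complex.normSq (x i) : ℝ)⁻¹ : ℝ) : ℂ) by push_cast; ring]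
    rw [Complex.zero_le_real]
    exact inv_nonneg.mpr (Finset.sum_nonneg fun i _ => Complex.normSq_nonneg _)

lemma rhoX_trace {x : m → ℂ} (hx : x ≠ 0) : (rhoX x).trace = 1 := by
  have hc := normSq_sum_pos hx
  rw [rhoX, trace_smul, vecMulVec_trace, smul_eq_mul]
  rw [inv_mul_cancel₀]
  exact_mod_cast hc.ne'

lemma rhoX_idem {x : m → ℂ} (hx : x ≠ 0) : rhoX x * rhoX x = rhoX x := by
  have hc := normSq_sum_pos hx
  have hc' : (((∑ i, Complex.normSq (x i) : ℝ)) : ℂ) ≠ 0 := by exact_mod_cast hc.ne'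
  rw [rhoX, smul_mul_smul_comm, vecMulVec_sq, smul_smul, mul_assoc, inv_mul_cancel₀ hc',
    mul_one]

lemma rhoX_rank {x : m → ℂ} (hx : x ≠ 0) : (rhoX x).rank = 1 := by
  have h : ((rhoX x).rank : ℂ) = 1 := by
    rw [← suppProj_trace_s16 (rhoX_psd x).1, suppProj_of_idem (rhoX_psd x).1 (rhoX_idem hx),
      rhoX_trace hx]
  exact_mod_cast h

lemma rhoX_suppProj_mul_trace {x : m → ℂ} (hx : x ≠ 0) (σ : Matrix m m ℂ) :
    (suppProj (rhoX x) * σ).trace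
      = (((∑ i, Complex.normSq (x i) : ℝ)) : ℂ)⁻¹ • (star x ⬝ᵥ σ *ᵥ x) := by
  rw [suppProj_of_idem (rhoX_psd x).1 (rhoX_idem hx), rhoX, smul_mul_assoc, trace_smul,
    vecMulVec_mul_trace]

lemma eq_inv_smul_one_of_forms {k : Type*} [Fintype k] [DecidableEq k]
    (c : ℂ) (σ : Matrix k k ℂ)
    (h : ∀ x : k → ℂ, x ≠ 0 → star x ⬝ᵥ σ *ᵥ x = c * (star x ⬝ᵥ x)) :
    σ = c • 1 := by
  set M : Matrix k k ℂ := σ - c • 1 with hM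
  have key : ∀ x : k → ℂ, star x ⬝ᵥ M *ᵥ x = 0 := by
    intro x
    by_cases hx : x = 0
    · simp [hx]
    · rw [hM, sub_mulVec, dotProduct_sub, h x hx, smul_mulVec, one_mulVec,
        dotProduct_smul, smul_eq_mul, sub_self]
  have hT : Matrix.toEuclideanLin M = 0 := by
    rw [← inner_map_self_eq_zero]
    intro x
    have h1 : (inner ℂ (Matrix.toEuclideanLin M x) x : ℂ)
        = star (M *ᵥ (WithLp.equiv 2 _ x)) ⬝ᵥ (WithLp.equiv 2 _ x) := by
      rw [EuclideanSpace.inner_eq_star_dotProduct, dotProduct_comm]; rfl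
    rw [h1, star_dotProduct, key, star_zero]
  have : M = 0 := by
    have := congrArg (fun f => Matrix.toEuclideanLin.symm f) hT
    simpa using this
  rw [← sub_eq_zero]
  exact this

end aux

/-- A positive definite density matrix `σ` is maximally mixed, `σ = (1/n)·I`, iff
`Tr(Π_ρ σ) = rank ρ / rank σ` for every density matrix `ρ`; equivalently, iff the
limit `log(rank σ / rank ρ)` of `S_α(ρ‖σ)` as `α → 0⁺` coincides with the
min-relative entropy `D_min(ρ‖σ) = −log Tr(Π_ρ σ)` for every density matrix `ρ`. -/
theorem maximally_mixed_iff_trace_proj {n : ℕ} (hn : 0 < n)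
    (σ : Matrix (Fin n) (Fin n) ℂ) (hσ : σ.PosDef) (hσ1 : σ.trace = 1) :
    ((σ = ((n : ℂ))⁻¹ • (1 : Matrix (Fin n) (Fin n) ℂ)) ↔
      ∀ ρ : Matrix (Fin n) (Fin n) ℂ, ρ.PosSemidef → ρ.trace = 1 →
        (suppProj ρ * σ).trace = (ρ.rank : ℂ) / (σ.rank : ℂ)) ∧
    ((σ = ((n : ℂ))⁻¹ • (1 : Matrix (Fin n) (Fin n) ℂ)) ↔
      ∀ ρ : Matrix (Fin n) (Fin n) ℂ, ρ.PosSemidef → ρ.trace = 1 →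
        Real.log ((σ.rank : ℝ) / (ρ.rank : ℝ))
          = - Real.log (((suppProj ρ * σ).trace).re)) := by
  have hns : (n : ℂ) ≠ 0 := Nat.cast_ne_zero.mpr hn.ne'
  have hnr : (n : ℝ) ≠ 0 := Nat.cast_ne_zero.mpr hn.ne'
  have hrank : σ.rank = n := by
    rw [σ.rank_of_isUnit hσ.isUnit, Fintype.card_fin]
  have fwd : σ = ((n : ℂ))⁻¹ • 1 →
      ∀ ρ : Matrix (Fin n) (Fin n) ℂ, ρ.PosSemidef → ρ.trace = 1 →
      (suppProj ρ * σ).trace = (ρ.rank : ℂ) / (n : ℂ) := by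
    intro h ρ hρ _
    rw [h, Matrix.mul_smul, mul_one, trace_smul, suppProj_trace_s16 hρ.1, smul_eq_mul,
      div_eq_mul_inv, mul_comm]
  have bwd : (∀ x : Fin n → ℂ, x ≠ 0 →
      star x ⬝ᵥ σ *ᵥ x = (n:ℂ)⁻¹ * (star x ⬝ᵥ x)) → σ = ((n:ℂ))⁻¹ • 1 := by
    intro hforms
    exact eq_inv_smul_one_of_forms _ σ hforms
  constructor
  · constructor
    · intro h ρ h1 h2
      rw [hrank]
      exact fwd h ρ h1 h2
    · intro h
      apply bwd
      intro x hx
      have hc0 : (0:ℝ) < ∑ i, Complex.normSq (x i) := normSq_sum_pos hx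
      have hc : ((∑ i, Complex.normSq (x i) : ℝ) : ℂ) ≠ 0 := by exact_mod_cast hc0.ne'
      have key := h (rhoX x) (rhoX_psd x) (rhoX_trace hx)
      rw [rhoX_suppProj_mul_trace hx, rhoX_rank hx, hrank, smul_eq_mul] at key
      rw [dot_star_self]
      have : star x ⬝ᵥ σ *ᵥ x
          = ((∑ i, Complex.normSq (x i) : ℝ) : ℂ) * (((1:ℕ):ℂ) / (n:ℂ)) := by
        rw [← key, ← mul_assoc, mul_inv_cancel₀ hc, one_mul]
      rw [this]
      push_cast
      ring
  · constructor
    · intro h ρ h1 h2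
      have hr : 0 < ρ.rank := rank_pos_of_trace_one h1.1 h2
      have hrr : ((ρ.rank : ℝ)) ≠ 0 := Nat.cast_ne_zero.mpr hr.ne'
      have htr : ((suppProj ρ * σ).trace).re = (ρ.rank : ℝ) / (n : ℝ) := by
        rw [fwd h ρ h1 h2,
          show ((ρ.rank : ℂ)) / (n : ℂ) = (((ρ.rank : ℝ) / (n : ℝ) : ℝ) : ℂ) by push_cast; ring,
          Complex.ofReal_re]
      rw [htr, hrank, Real.log_div hnr hrr, Real.log_div hrr hnr]
      ring
    · intro h
      apply bwd
      intro x hx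
      have hc0 : (0:ℝ) < ∑ i, Complex.normSq (x i) := normSq_sum_pos hx
      have hq := hσ.dotProduct_mulVec_pos hx
      have hqre : 0 < (star x ⬝ᵥ σ *ᵥ x).re := by
        have := (Complex.lt_def.mp hq).1; simpa using this
      have hqim : (star x ⬝ᵥ σ *ᵥ x).im = 0 := by
        have := (Complex.lt_def.mp hq).2; simpa using this.symm
      have key := h (rhoX x) (rhoX_psd x) (rhoX_trace hx)
      rw [rhoX_suppProj_mul_trace hx, rhoX_rank hx, hrank, smul_eq_mul] at key
      have hre : (((∑ i, Complex.normSq (x i) : ℝ) : ℂ)⁻¹ * (star x ⬝ᵥ σ *ᵥ x)).re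
          = (∑ i, Complex.normSq (x i))⁻¹ * (star x ⬝ᵥ σ *ᵥ x).re := by
        rw [show (((∑ i, Complex.normSq (x i) : ℝ) : ℂ))⁻¹
            = (((∑ i, Complex.normSq (x i))⁻¹ : ℝ) : ℂ) by push_cast; ring,
          Complex.re_ofReal_mul]
      rw [hre] at key
      set a : ℝ := (∑ i, Complex.normSq (x i))⁻¹ * (star x ⬝ᵥ σ *ᵥ x).re with ha
      have hapos : 0 < a := mul_pos (inv_pos.mpr hc0) hqre
      have hlog : Real.log (a⁻¹) = Real.log ((n:ℝ)) := by
        rw [Real.log_inv]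
        simp only [Nat.cast_one, div_one] at key
        linarith [key]
      have hainv : a⁻¹ = (n:ℝ) :=
        Real.log_injOn_pos (Set.mem_Ioi.mpr (inv_pos.mpr hapos))
          (Set.mem_Ioi.mpr (by exact_mod_cast hn)) hlog
      have haval : a = (n:ℝ)⁻¹ := by
        rw [← hainv, inv_inv]
      have hqval : (star x ⬝ᵥ σ *ᵥ x).re = (∑ i, Complex.normSq (x i)) * (n:ℝ)⁻¹ := by
        have := haval
        rw [ha] at this
        field_simp at this ⊢
        linarith [this]
      have hqeq : star x ⬝ᵥ σ *ᵥ x = (((star x ⬝ᵥ σ *ᵥ x).re : ℝ) : ℂ) := by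
        apply Complex.ext
        · simp
        · simp [hqim]
      rw [dot_star_self, hqeq, hqval]
      push_cast
      ring
end

section
/- Let α > 0 with α ≠ 1, and let ρ and σ be density matrices on ℂ^n with σ positive definite, with spectral decompositions ρ = Σ_i p_i |x_i⟩⟨x_i| and σ = Σ_j q_j |y_j⟩⟨y_j| for orthonormal bases {|x_i⟩}, {|y_j⟩}. Define the escort Nussbaum–Szkoła distributions on {1,…,n}×{1,…,n} by P^{(α)}(i,j) = p_i^α·|⟨x_i|y_j⟩|²/Tr(ρ^α) and Q^{(α)}(i,j) = q_j^α·|⟨x_i|y_j⟩|²/Tr(σ^α), let s = sgn((1−α)/α) (so s = 1 for α < 1 and s = −1 for α > 1), and let f(x) = s·(x^{1/α} − 1). Then the quantum relative α-entropy equals the classical relative α-entropy of the Nussbaum–Szkoła distributions: S_α(ρ‖σ) = (α/(1−α))·log[ s·D_f(P^{(α)} ‖ Q^{(α)}) + 1 ], where D_f(P^{(α)} ‖ Q^{(α)}) = Σ_{(i,j): ⟨x_i|y_j⟩ ≠ 0} f( P^{(α)}(i,j) / Q^{(α)}(i,j) )·Q^{(α)}(i,j). -/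
open Matrix ComplexOrder

section Helpers

variable {n : ℕ}

open Polynomial

noncomputable def conjAH (V : Matrix (Fin n) (Fin n) ℂ) (h1 : V * Vᴴ = 1) (h2 : Vᴴ * V = 1) :
    Matrix (Fin n) (Fin n) ℂ →ₐ[ℂ] Matrix (Fin n) (Fin n) ℂ where
  toFun X := V * X * Vᴴ
  map_one' := by simp only [mul_one, h1]
  map_mul' X Y := by
    show V * (X * Y) * Vᴴ = V * X * Vᴴ * (V * Y * Vᴴ)
    calc V * (X * Y) * Vᴴ = V * X * (Vᴴ * V) * Y * Vᴴ := by
          simp only [h2, mul_one, mul_assoc]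
    _ = V * X * Vᴴ * (V * Y * Vᴴ) := by simp only [mul_assoc]
  map_zero' := by simp
  map_add' X Y := by simp [Matrix.mul_add, Matrix.add_mul]
  commutes' c := by
    simp only [Algebra.algebraMap_eq_smul_one, Matrix.mul_smul, Matrix.smul_mul, mul_one, h1]

lemma aeval_diagonal (d : Fin n → ℂ) (φ : ℂ[X]) :
    aeval (diagonal d) φ = diagonal (fun i => φ.eval (d i)) := by
  have h := Polynomial.aeval_algHom_apply (Matrix.diagonalAlgHom (n := Fin n) (α := ℂ) ℂ) d φ
  simp only [Matrix.diagonalAlgHom_apply] at h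
  have h2 : aeval d φ = fun i => φ.eval (d i) := by
    funext i
    rw [show (aeval d φ) i = (Pi.evalAlgHom ℂ (fun _ : Fin n => ℂ) i) (aeval d φ) from rfl,
      ← Polynomial.aeval_algHom_apply, aeval_def, eval₂_eq_eval_map]
    simp [Polynomial.map_id]
  rw [h, h2]

lemma aeval_conj (V : Matrix (Fin n) (Fin n) ℂ) (h1 : V * Vᴴ = 1) (h2 : Vᴴ * V = 1)
    (d : Fin n → ℂ) (φ : ℂ[X]) :
    aeval (V * diagonal d * Vᴴ) φ = V * diagonal (fun i => φ.eval (d i)) * Vᴴ := by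
  have h := Polynomial.aeval_algHom_apply (conjAH V h1 h2) (diagonal d) φ
  rw [show conjAH V h1 h2 (diagonal d) = V * diagonal d * Vᴴ from rfl] at h
  rw [h, aeval_diagonal]
  rfl


lemma mRpow_eq_of_decomp (A : Matrix (Fin n) (Fin n) ℂ) (hA : A.IsHermitian)
    (V : Matrix (Fin n) (Fin n) ℂ) (h1 : V * Vᴴ = 1) (h2 : Vᴴ * V = 1)
    (c : Fin n → ℝ) (hAV : A = V * diagonal (fun i => (c i : ℂ)) * Vᴴ) (r : ℝ) :
    mRpow A r = V * diagonal (fun i => ((c i ^ r : ℝ) : ℂ)) * Vᴴ := by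
  classical
  set U : Matrix (Fin n) (Fin n) ℂ := (hA.eigenvectorUnitary : Matrix (Fin n) (Fin n) ℂ) with hU
  have hU2 : Uᴴ * U = 1 := by
    have := hA.eigenvectorUnitary.2
    rw [Unitary.mem_iff] at this
    simpa [Matrix.star_eq_conjTranspose] using this.1
  have hU1 : U * Uᴴ = 1 := by
    have := hA.eigenvectorUnitary.2
    rw [Unitary.mem_iff] at this
    simpa [Matrix.star_eq_conjTranspose] using this.2
  have hspec : A = U * diagonal (fun i => ((hA.eigenvalues i : ℝ) : ℂ)) * Uᴴ := by
    rw [hU]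
    simpa [Function.comp_def, Matrix.star_eq_conjTranspose] using hA.spectral_theorem
  set S : Finset ℝ := Finset.univ.image c ∪ Finset.univ.image hA.eigenvalues with hS
  set φ : Polynomial ℝ := Lagrange.interpolate S id (fun t => t ^ r) with hφ
  set ψ : Polynomial ℂ := φ.map (algebraMap ℝ ℂ) with hψ
  have key : ∀ t : ℝ, t ∈ S → ψ.eval ((t : ℝ) : ℂ) = ((t ^ r : ℝ) : ℂ) := by
    intro t ht
    have : φ.eval t = t ^ r :=
      Lagrange.eval_interpolate_at_node _ (Set.injOn_id _) ht
    rw [hψ, Polynomial.eval_map, show ((t:ℝ):ℂ) = algebraMap ℝ ℂ t from rfl,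
      Polynomial.eval₂_at_apply, this]
    rfl
  have e1 : Polynomial.aeval A ψ = V * diagonal (fun i => ((c i ^ r : ℝ) : ℂ)) * Vᴴ := by
    have hfun : ∀ i, Polynomial.eval ((c i : ℂ)) ψ = ((c i ^ r : ℝ) : ℂ) :=
      fun i => key (c i)
        (Finset.mem_union_left _ (Finset.mem_image_of_mem _ (Finset.mem_univ i)))
    rw [hAV, aeval_conj V h1 h2]
    simp only [hfun]
  have e2 : Polynomial.aeval A ψ = U * diagonal (fun i => ((hA.eigenvalues i ^ r : ℝ) : ℂ)) * Uᴴ := by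
    have hfun : ∀ i, Polynomial.eval ((hA.eigenvalues i : ℂ)) ψ
        = ((hA.eigenvalues i ^ r : ℝ) : ℂ) :=
      fun i => key _
        (Finset.mem_union_right _ (Finset.mem_image_of_mem _ (Finset.mem_univ i)))
    conv_lhs => rw [hspec]
    rw [aeval_conj U hU1 hU2]
    simp only [hfun]
  rw [mRpow, dif_pos hA]
  show U * diagonal (fun i => ((hA.eigenvalues i ^ r : ℝ) : ℂ)) * Uᴴ = _
  exact e2.symm.trans e1

lemma conj_diag_eq_sum (y : Fin n → (Fin n → ℂ)) (c : Fin n → ℂ) :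
    (Matrix.of (fun i j => y j i)) * diagonal c * (Matrix.of (fun i j => y j i))ᴴ
      = ∑ j, c j • vecMulVec (y j) (star (y j)) := by
  ext a b
  rw [Matrix.sum_apply]
  rw [Matrix.mul_apply]
  simp only [Matrix.mul_apply, Matrix.diagonal_apply, Matrix.of_apply, Matrix.conjTranspose_apply,
    Pi.smul_apply, vecMulVec_apply, Pi.star_apply, smul_eq_mul, mul_ite, ite_mul, zero_mul,
    mul_zero, Finset.sum_ite_eq', Finset.mem_univ, if_true, Matrix.smul_apply]
  refine Finset.sum_congr rfl fun j _ => by ring_nf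

lemma onb_unitary (y : Fin n → (Fin n → ℂ))
    (hy : ∀ i j, star (y i) ⬝ᵥ y j = if i = j then 1 else 0) :
    (Matrix.of (fun i j => y j i))ᴴ * (Matrix.of (fun i j => y j i)) = 1 := by
  ext a b
  have := hy a b
  simpa [Matrix.mul_apply, Matrix.conjTranspose_apply, dotProduct, Matrix.one_apply] using this

lemma trace_vmv_mul (a b : Fin n → ℂ) : trace (vecMulVec a (star a) * vecMulVec b (star b))
    = (star a ⬝ᵥ b) * (star b ⬝ᵥ a) := by
  simp only [Matrix.trace, Matrix.diag, Matrix.mul_apply, vecMulVec_apply, dotProduct,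
    Pi.star_apply, Finset.sum_mul, Finset.mul_sum]
  refine Finset.sum_congr rfl fun k _ => Finset.sum_congr rfl fun l _ => by ring

lemma mRpow_of_onb (A : Matrix (Fin n) (Fin n) ℂ) (hA : A.IsHermitian)
    (c : Fin n → ℝ) (y : Fin n → (Fin n → ℂ))
    (hy : ∀ i j, star (y i) ⬝ᵥ y j = if i = j then 1 else 0)
    (hAdec : A = ∑ j, (c j : ℂ) • vecMulVec (y j) (star (y j))) (r : ℝ) :
    mRpow A r = ∑ j, ((c j ^ r : ℝ) : ℂ) • vecMulVec (y j) (star (y j)) := by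
  have h2 := onb_unitary y hy
  have h1 : (Matrix.of (fun i j => y j i)) * (Matrix.of (fun i j => y j i))ᴴ = 1 :=
    mul_eq_one_comm.mp h2
  rw [mRpow_eq_of_decomp A hA _ h1 h2 c (by rw [conj_diag_eq_sum]; exact hAdec) r,
    conj_diag_eq_sum]

lemma trace_sum_vmv (c : Fin n → ℂ) (y : Fin n → (Fin n → ℂ))
    (hy : ∀ i j, star (y i) ⬝ᵥ y j = if i = j then 1 else 0) :
    trace (∑ j, c j • vecMulVec (y j) (star (y j))) = ∑ j, c j := by
  rw [trace_sum]
  refine Finset.sum_congr rfl fun j _ => ?_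
  rw [trace_smul]
  have : trace (vecMulVec (y j) (star (y j))) = star (y j) ⬝ᵥ y j := by
    simp [Matrix.trace, Matrix.diag, vecMulVec_apply, dotProduct, mul_comm]
  rw [this, hy j j, if_pos rfl, smul_eq_mul, mul_one]

lemma dot_conj (a b : Fin n → ℂ) :
    (star a ⬝ᵥ b) * (star b ⬝ᵥ a) = ((‖star a ⬝ᵥ b‖ ^ 2 : ℝ) : ℂ) := by
  have h : star b ⬝ᵥ a = starRingEnd ℂ (star a ⬝ᵥ b) := by
    simp [dotProduct, map_sum, mul_comm]
  rw [h, Complex.mul_conj]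
  simp [Complex.normSq_eq_norm_sq]

lemma trace_mul_sum_vmv (p d : Fin n → ℝ) (x y : Fin n → (Fin n → ℂ)) :
    trace ((∑ i, (p i : ℂ) • vecMulVec (x i) (star (x i)))
        * (∑ j, (d j : ℂ) • vecMulVec (y j) (star (y j))))
      = ((∑ i, ∑ j, p i * d j * ‖star (x i) ⬝ᵥ y j‖ ^ 2 : ℝ) : ℂ) := by
  rw [Finset.sum_mul_sum, trace_sum]
  push_cast
  refine Finset.sum_congr rfl fun i _ => ?_
  rw [trace_sum]
  refine Finset.sum_congr rfl fun j _ => ?_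
  rw [Matrix.smul_mul, Matrix.mul_smul, trace_smul, trace_smul, trace_vmv_mul, dot_conj]
  push_cast
  simp only [smul_eq_mul]
  ring

lemma trace_mul_vmv (M : Matrix (Fin n) (Fin n) ℂ) (v : Fin n → ℂ) :
    trace (M * vecMulVec v (star v)) = star v ⬝ᵥ (M *ᵥ v) := by
  simp only [Matrix.trace, Matrix.diag, Matrix.mul_apply, vecMulVec_apply, Pi.star_apply,
    Matrix.mulVec, dotProduct, Finset.mul_sum]
  exact Finset.sum_congr rfl fun k _ => Finset.sum_congr rfl fun l _ => by ring

lemma norm_dot_comm (a b : Fin n → ℂ) : ‖star a ⬝ᵥ b‖ = ‖star b ⬝ᵥ a‖ := by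
  have h : star b ⬝ᵥ a = starRingEnd ℂ (star a ⬝ᵥ b) := by
    simp [dotProduct, map_sum, mul_comm]
  rw [h, RCLike.norm_conj]

lemma parseval (y : Fin n → (Fin n → ℂ))
    (hy : ∀ i j, star (y i) ⬝ᵥ y j = if i = j then 1 else 0)
    (v : Fin n → ℂ) (hv : star v ⬝ᵥ v = 1) :
    ∑ j, ‖star v ⬝ᵥ y j‖ ^ 2 = (1 : ℝ) := by
  have h2 := onb_unitary y hy
  have h1 := mul_eq_one_comm.mp h2
  have hcomp : ∑ j, vecMulVec (y j) (star (y j)) = (1 : Matrix (Fin n) (Fin n) ℂ) := by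
    have := conj_diag_eq_sum y (fun _ => (1 : ℂ))
    simp only [Matrix.diagonal_one, mul_one, one_smul] at this
    rw [← this, h1]
  have key : ((∑ j, ‖star v ⬝ᵥ y j‖ ^ 2 : ℝ) : ℂ) = 1 := by
    push_cast
    have : ∀ j : Fin n, ((‖star v ⬝ᵥ y j‖ : ℂ) ^ 2)
        = trace (vecMulVec (y j) (star (y j)) * vecMulVec v (star v)) := by
      intro j
      rw [trace_vmv_mul, dot_conj]
      push_cast
      rw [norm_dot_comm]
    simp_rw [this]
    rw [← trace_sum, ← Finset.sum_mul, hcomp, one_mul,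
      show trace (vecMulVec v (star v)) = v ⬝ᵥ star v by
        simp [Matrix.trace, Matrix.diag, vecMulVec_apply, dotProduct],
      dotProduct_comm, hv]
  exact_mod_cast key

end Helpers

/-- Nussbaum–Szkoła correspondence: the quantum relative α-entropy equals the classical
relative α-entropy of the (escort) Nussbaum–Szkoła distributions:
`S_α(ρ‖σ) = (α/(1−α))·log[ s·D_f(P^{(α)} ‖ Q^{(α)}) + 1 ]` with `s = sgn((1−α)/α)` and
`f(x) = s(x^{1/α} − 1)`. -/
theorem Salpha_eq_nz_relative_entropy {n : ℕ} (α : ℝ) (hα : 0 < α) (hα1 : α ≠ 1)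
    (ρ σ : Matrix (Fin n) (Fin n) ℂ)
    (hρ : ρ.PosSemidef) (hρ1 : ρ.trace = 1)
    (hσ : σ.PosDef) (hσ1 : σ.trace = 1)
    (p q : Fin n → ℝ) (x y : Fin n → (Fin n → ℂ))
    (hp : ∀ i, 0 ≤ p i) (hq : ∀ j, 0 ≤ q j)
    (hx : ∀ i j, star (x i) ⬝ᵥ x j = if i = j then 1 else 0)
    (hy : ∀ i j, star (y i) ⬝ᵥ y j = if i = j then 1 else 0)
    (hρdec : ρ = ∑ i, (p i : ℂ) • vecMulVec (x i) (star (x i)))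
    (hσdec : σ = ∑ j, (q j : ℂ) • vecMulVec (y j) (star (y j)))
    (Pα Qα : Fin n → Fin n → ℝ)
    (hP : ∀ i j, Pα i j = p i ^ α * ‖star (x i) ⬝ᵥ y j‖ ^ 2 / (mRpow ρ α).trace.re)
    (hQ : ∀ i j, Qα i j = q j ^ α * ‖star (x i) ⬝ᵥ y j‖ ^ 2 / (mRpow σ α).trace.re)
    (s : ℝ) (hs : s = if α < 1 then 1 else -1)
    (f : ℝ → ℝ) (hf : ∀ z : ℝ, f z = s * (z ^ (1/α) - 1))
    (Df : ℝ)
    (hDf : Df = ∑ i, ∑ j,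
      if star (x i) ⬝ᵥ y j = 0 then 0 else f (Pα i j / Qα i j) * Qα i j) :
    Salpha α ρ σ = α / (1 - α) * Real.log (s * Df + 1) := by
  classical
  have hρH : ρ.IsHermitian := hρ.1
  have hσH : σ.IsHermitian := hσ.isHermitian
  have hα0 : α ≠ 0 := ne_of_gt hα
  have h1α : (1 : ℝ) - α ≠ 0 := fun h => hα1 (by linarith)
  set c : Fin n → Fin n → ℝ := fun i j => ‖star (x i) ⬝ᵥ y j‖ ^ 2 with hc
  have hc0 : ∀ i j, 0 ≤ c i j := fun i j => by positivity
  have hxx : ∀ i, star (x i) ⬝ᵥ x i = 1 := fun i => by rw [hx i i, if_pos rfl]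
  have hyy : ∀ j, star (y j) ⬝ᵥ y j = 1 := fun j => by rw [hy j j, if_pos rfl]
  have hrow : ∀ i, ∑ j, c i j = 1 := fun i => parseval y hy (x i) (hxx i)
  have hcol : ∀ j, ∑ i, c i j = 1 := fun j => by
    have h := parseval x hx (y j) (hyy j)
    rw [← h]
    exact Finset.sum_congr rfl fun i _ => by rw [hc]; simp only []; rw [norm_dot_comm]
  -- q is positive
  have hq' : ∀ j, 0 < q j := by
    intro j
    have hyne : y j ≠ 0 := by
      intro h
      have h1 := hyy j
      rw [h] at h1
      simp [dotProduct] at h1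
    have hpos := hσ.re_dotProduct_pos hyne
    have hdot : star (y j) ⬝ᵥ (σ *ᵥ y j) = (q j : ℂ) := by
      rw [← trace_mul_vmv σ (y j), hσdec, Matrix.sum_mul, trace_sum]
      simp_rw [Matrix.smul_mul, trace_smul, trace_vmv_mul, hy]
      simp
    rw [hdot] at hpos
    simpa using hpos
  -- sum of p equals 1
  have hps : ∑ i, p i = 1 := by
    have h := hρ1
    rw [hρdec, trace_sum_vmv _ x hx] at h
    exact_mod_cast h
  obtain ⟨i0, hi0⟩ : ∃ i, 0 < p i := by
    by_contra h
    push_neg at h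
    have : ∀ i, p i = 0 := fun i => le_antisymm (h i) (hp i)
    rw [Finset.sum_congr rfl fun i _ => this i] at hps
    simp at hps
  have hnE : Nonempty (Fin n) := ⟨i0⟩
  -- traces
  set T2r := ∑ i, p i ^ α with hT2r
  set T3r := ∑ j, q j ^ α with hT3r
  set T1r := ∑ i, ∑ j, p i * q j ^ (α-1) * c i j with hT1r
  have hT2eq : (mRpow ρ α).trace.re = T2r := by
    rw [mRpow_of_onb ρ hρH p x hx hρdec α, trace_sum_vmv _ x hx]
    rw [hT2r]
    push_cast
    simp
  have hT3eq : (mRpow σ α).trace.re = T3r := by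
    rw [mRpow_of_onb σ hσH q y hy hσdec α, trace_sum_vmv _ y hy]
    rw [hT3r]
    push_cast
    simp
  have hT1eq : (ρ * mRpow σ (α-1)).trace.re = T1r := by
    rw [mRpow_of_onb σ hσH q y hy hσdec (α-1), hρdec, trace_mul_sum_vmv]
    rw [hT1r, Complex.ofReal_re]
  -- positivity
  have hT2pos : 0 < T2r := by
    have h1 : 0 < p i0 ^ α := Real.rpow_pos_of_pos hi0 α
    have h2 : p i0 ^ α ≤ T2r :=
      Finset.single_le_sum (fun i _ => Real.rpow_nonneg (hp i) α) (Finset.mem_univ i0)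
    linarith
  have hT3pos : 0 < T3r :=
    Finset.sum_pos (fun j _ => Real.rpow_pos_of_pos (hq' j) α) Finset.univ_nonempty
  obtain ⟨j0, hj0⟩ : ∃ j, 0 < c i0 j := by
    by_contra h
    push_neg at h
    have : ∀ j, c i0 j = 0 := fun j => le_antisymm (h j) (hc0 i0 j)
    have h1 := hrow i0
    rw [Finset.sum_congr rfl fun j _ => this j] at h1
    simp at h1
  have hterm_nonneg : ∀ i j, 0 ≤ p i * q j ^ (α-1) * c i j := fun i j =>
    mul_nonneg (mul_nonneg (hp i) (Real.rpow_pos_of_pos (hq' j) _).le) (hc0 i j)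
  have hT1pos : 0 < T1r := by
    refine Finset.sum_pos' (fun i _ => Finset.sum_nonneg fun j _ => hterm_nonneg i j)
      ⟨i0, Finset.mem_univ i0, ?_⟩
    refine Finset.sum_pos' (fun j _ => hterm_nonneg i0 j) ⟨j0, Finset.mem_univ j0, ?_⟩
    exact mul_pos (mul_pos hi0 (Real.rpow_pos_of_pos (hq' j0) _)) hj0
  set K := T3r ^ (1/α - 1) * T2r ^ (-(1/α)) with hK
  have hKpos : 0 < K :=
    mul_pos (Real.rpow_pos_of_pos hT3pos _) (Real.rpow_pos_of_pos hT2pos _)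
  have hP' : ∀ i j, Pα i j = p i ^ α * c i j / T2r := fun i j => by
    rw [hP i j, hT2eq]
  have hQ' : ∀ i j, Qα i j = q j ^ α * c i j / T3r := fun i j => by
    rw [hQ i j, hT3eq]
  -- core rpow computation
  have hcore : ∀ i j, star (x i) ⬝ᵥ y j ≠ 0 →
      (Pα i j / Qα i j) ^ (1/α) * Qα i j = p i * q j ^ (α-1) * c i j * K := by
    intro i j h
    have hcij : 0 < c i j := pow_pos (norm_pos_iff.mpr h) 2
    have hqj := hq' j
    have hPQ : Pα i j / Qα i j = (p i ^ α / T2r) * (T3r / q j ^ α) := by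
      rw [hP' i j, hQ' i j]
      field_simp
    rw [hPQ, hQ' i j]
    have e0 : ((p i ^ α / T2r) * (T3r / q j ^ α)) ^ (1/α)
        = (p i ^ α / T2r) ^ (1/α) * (T3r / q j ^ α) ^ (1/α) :=
      Real.mul_rpow (div_nonneg (Real.rpow_nonneg (hp i) α) hT2pos.le)
        (div_nonneg hT3pos.le (Real.rpow_nonneg (hq j) α))
    have e1 : (p i ^ α / T2r) ^ (1/α) = p i / T2r ^ (1/α) := by
      rw [Real.div_rpow (Real.rpow_nonneg (hp i) α) hT2pos.le,
        ← Real.rpow_mul (hp i), mul_one_div_cancel hα0, Real.rpow_one]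
    have e2 : (T3r / q j ^ α) ^ (1/α) = T3r ^ (1/α) / q j := by
      rw [Real.div_rpow hT3pos.le (Real.rpow_nonneg (hq j) α),
        ← Real.rpow_mul (hq j), mul_one_div_cancel hα0, Real.rpow_one]
    rw [e0, e1, e2, hK]
    rw [Real.rpow_sub hT3pos, Real.rpow_one, Real.rpow_neg hT2pos.le,
      Real.rpow_sub hqj, Real.rpow_one]
    have hT2rne : T2r ^ (1/α) ≠ 0 := (Real.rpow_pos_of_pos hT2pos _).ne'
    field_simp
  -- sum of Q is 1
  have hQsum : ∑ i, ∑ j, Qα i j = 1 := by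
    rw [Finset.sum_comm]
    have : ∀ j, ∑ i, Qα i j = q j ^ α / T3r := by
      intro j
      simp_rw [hQ']
      rw [← Finset.sum_div, ← Finset.mul_sum, hcol j, mul_one]
    rw [Finset.sum_congr rfl fun j _ => this j, ← Finset.sum_div, ← hT3r,
      div_self hT3pos.ne']
  have hss : s * s = 1 := by rw [hs]; split <;> norm_num
  have hDf' : Df = ∑ i, ∑ j, s * (p i * q j ^ (α-1) * c i j * K - Qα i j) := by
    rw [hDf]
    refine Finset.sum_congr rfl fun i _ => Finset.sum_congr rfl fun j _ => ?_
    by_cases h : star (x i) ⬝ᵥ y j = 0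
    · rw [if_pos h]
      have hc00 : c i j = 0 := by rw [hc]; simp [h]
      rw [hQ' i j, hc00]
      simp
    · rw [if_neg h, hf, ← hcore i j h]
      ring
  have hsDf : s * Df + 1 = T1r * K := by
    rw [hDf']
    have : s * ∑ i, ∑ j, s * (p i * q j ^ (α-1) * c i j * K - Qα i j)
        = ∑ i, ∑ j, (p i * q j ^ (α-1) * c i j * K - Qα i j) := by
      rw [Finset.mul_sum]
      refine Finset.sum_congr rfl fun i _ => ?_
      rw [Finset.mul_sum]
      refine Finset.sum_congr rfl fun j _ => ?_
      rw [← mul_assoc, hss, one_mul]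
    rw [this]
    simp_rw [Finset.sum_sub_distrib]
    rw [hQsum]
    have h2 : ∑ i, ∑ j, p i * q j ^ (α-1) * c i j * K = T1r * K := by
      rw [hT1r, Finset.sum_mul]
      exact Finset.sum_congr rfl fun i _ => (Finset.sum_mul _ _ _).symm
    rw [h2]
    ring
  -- final log computation
  rw [Salpha, hT1eq, hT2eq, hT3eq, hsDf]
  rw [Real.log_mul hT1pos.ne' hKpos.ne', hK,
    Real.log_mul (Real.rpow_pos_of_pos hT3pos _).ne' (Real.rpow_pos_of_pos hT2pos _).ne',
    Real.log_rpow hT3pos, Real.log_rpow hT2pos]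
  field_simp
  ring
end

section
/- Let α > 0 with α ≠ 1, and let ρ and σ be density matrices on ℂ^n with σ positive definite. Then the quantum density power divergence S̄_α(ρ‖σ) = (α/(1−α))·Tr(ρ σ^{α−1}) − (1/(1−α))·Tr(ρ^α) + Tr(σ^α) is nonnegative: S̄_α(ρ‖σ) ≥ 0, with equality if and only if ρ = σ. -/
open Matrix ComplexOrder

/-- The quantum density power divergence
`S̄_α(ρ‖σ) = (α/(1−α))·Tr(ρσ^{α−1}) − (1/(1−α))·Tr(ρ^α) + Tr(σ^α)`. -/
noncomputable def Sbar {m : Type*} [Fintype m] [DecidableEq m]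
    (α : ℝ) (ρ σ : Matrix m m ℂ) : ℝ :=
  α / (1 - α) * ((ρ * mRpow σ (α - 1)).trace.re)
    - 1 / (1 - α) * ((mRpow ρ α).trace.re)
    + ((mRpow σ α).trace.re)

lemma key_scalar (α : ℝ) (hα : 0 < α) (hα1 : α ≠ 1) {l m : ℝ} (hl : 0 ≤ l) (hm : 0 < m) :
    0 ≤ (1 - α)⁻¹ * (α * (l * m ^ (α - 1)) - l ^ α + (1 - α) * m ^ α) ∧
      ((1 - α)⁻¹ * (α * (l * m ^ (α - 1)) - l ^ α + (1 - α) * m ^ α) = 0 ↔ l = m) := by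
  have hm' : (0:ℝ) < m ^ α := Real.rpow_pos_of_pos hm α
  set s : ℝ := l / m - 1 with hs_def
  have hs : -1 ≤ s := by
    have : 0 ≤ l / m := div_nonneg hl hm.le
    simp only [hs_def]; linarith
  have hsl : s = 0 ↔ l = m := by
    rw [hs_def, sub_eq_zero, div_eq_one_iff_eq hm.ne']
  have key : (1 + s) ^ α * m ^ α = l ^ α := by
    have h1 : (1:ℝ) + s = l / m := by simp [hs_def]
    rw [h1, Real.div_rpow hl hm.le, div_mul_cancel₀ _ hm'.ne']
  have key2 : (1 + s) * m ^ α = l * m ^ (α - 1) := by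
    have h1 : (1:ℝ) + s = l / m := by simp [hs_def]
    rw [h1, Real.rpow_sub hm, Real.rpow_one]
    field_simp
  have hE : α * (l * m ^ (α - 1)) - l ^ α + (1 - α) * m ^ α
      = (1 + α * s - (1 + s) ^ α) * m ^ α := by
    rw [← key, ← key2]; ring
  rw [hE]
  rcases hα1.lt_or_gt with h1 | h1
  · have hinv : (0:ℝ) < (1 - α)⁻¹ := by
      rw [inv_pos]; linarith
    have hD : 0 ≤ 1 + α * s - (1 + s) ^ α := by
      have := rpow_one_add_le_one_add_mul_self hs hα.le h1.le
      linarith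
    refine ⟨by positivity, ?_, ?_⟩
    · intro h
      by_contra hne
      have hs0 : s ≠ 0 := fun h0 => hne (hsl.mp h0)
      have hlt := rpow_one_add_lt_one_add_mul_self hs hs0 hα h1
      have hP : 0 < (1 + α * s - (1 + s) ^ α) * m ^ α := by nlinarith
      nlinarith [mul_pos hinv hP]
    · intro h
      have hs0 : s = 0 := hsl.mpr h
      simp [hs0]
  · have hinv : (1 - α)⁻¹ < 0 := by
      rw [inv_lt_zero]; linarith
    have hD : 1 + α * s - (1 + s) ^ α ≤ 0 := by
      have := one_add_mul_self_le_rpow_one_add hs h1.le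
      linarith
    have hnn : (1 + α * s - (1 + s) ^ α) * m ^ α ≤ 0 :=
      mul_nonpos_of_nonpos_of_nonneg hD hm'.le
    constructor
    · nlinarith [mul_nonneg (neg_nonneg.mpr hinv.le) (neg_nonneg.mpr hnn)]
    constructor
    · intro h
      by_contra hne
      have hs0 : s ≠ 0 := fun h0 => hne (hsl.mp h0)
      have hlt := one_add_mul_self_lt_rpow_one_add hs hs0 h1
      have hP : (1 + α * s - (1 + s) ^ α) * m ^ α < 0 := by nlinarith
      nlinarith [mul_pos_of_neg_of_neg hinv hP]
    · intro h
      have hs0 : s = 0 := hsl.mpr h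
      simp [hs0]

lemma trace_diag_mul {n : ℕ} (d e : Fin n → ℂ) (W : Matrix (Fin n) (Fin n) ℂ) :
    (Matrix.diagonal d * W * Matrix.diagonal e * star W).trace
      = ∑ i, ∑ j, d i * e j * (W i j * star (W i j)) := by
  simp only [Matrix.star_eq_conjTranspose, Matrix.trace, Matrix.diag_apply, Matrix.mul_apply,
    Matrix.diagonal_apply, Matrix.conjTranspose_apply, ite_mul, zero_mul, mul_ite, mul_zero,
    Finset.sum_ite_eq, Finset.sum_ite_eq', Finset.mem_univ, if_true]
  refine Finset.sum_congr rfl fun i _ => Finset.sum_congr rfl fun j _ => ?_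
  ring

lemma trace_aux {n : ℕ} (A B D E : Matrix (Fin n) (Fin n) ℂ) :
    (A * D * star A * (B * E * star B)).trace
      = (D * (star A * B) * E * star (star A * B)).trace := by
  rw [StarMul.star_mul, star_star]
  rw [show A * D * star A * (B * E * star B) = A * (D * (star A * B) * E * star B) from by
    noncomm_ring]
  rw [Matrix.trace_mul_comm]
  congr 1
  noncomm_ring

set_option maxHeartbeats 1000000 in
/-- Nonnegativity of the quantum density power divergence, with equality iff `ρ = σ`. -/
theorem Sbar_nonneg_and_eq_zero_iff {n : ℕ} (α : ℝ) (hα : 0 < α) (hα1 : α ≠ 1)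
    (ρ σ : Matrix (Fin n) (Fin n) ℂ)
    (hρ : ρ.PosSemidef) (hρ1 : ρ.trace = 1)
    (hσ : σ.PosDef) (hσ1 : σ.trace = 1) :
    0 ≤ Sbar α ρ σ ∧ (Sbar α ρ σ = 0 ↔ ρ = σ) := by
  have hρH : ρ.IsHermitian := hρ.1
  have hσH : σ.IsHermitian := hσ.1
  set A : Matrix (Fin n) (Fin n) ℂ := (hρH.eigenvectorUnitary : Matrix (Fin n) (Fin n) ℂ) with hA
  set B : Matrix (Fin n) (Fin n) ℂ := (hσH.eigenvectorUnitary : Matrix (Fin n) (Fin n) ℂ) with hB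
  set lam : Fin n → ℝ := hρH.eigenvalues with hlam
  set mu : Fin n → ℝ := hσH.eigenvalues with hmu
  have hA1 : star A * A = 1 := Matrix.mem_unitaryGroup_iff'.mp hρH.eigenvectorUnitary.2
  have hA2 : A * star A = 1 := Matrix.mem_unitaryGroup_iff.mp hρH.eigenvectorUnitary.2
  have hB1 : star B * B = 1 := Matrix.mem_unitaryGroup_iff'.mp hσH.eigenvectorUnitary.2
  have hB2 : B * star B = 1 := Matrix.mem_unitaryGroup_iff.mp hσH.eigenvectorUnitary.2
  set W : Matrix (Fin n) (Fin n) ℂ := star A * B with hW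
  have hWu : W * star W = 1 := by
    rw [hW, StarMul.star_mul, star_star,
      show star A * B * (star B * A) = star A * (B * star B) * A from by noncomm_ring,
      hB2, mul_one, hA1]
  have hWu' : star W * W = 1 := by
    rw [hW, StarMul.star_mul, star_star,
      show star B * A * (star A * B) = star B * (A * star A) * B from by noncomm_ring,
      hA2, mul_one, hB1]
  have hT2 : (mRpow ρ α).trace.re = ∑ i, lam i ^ α := by
    rw [mRpow, dif_pos hρH, Matrix.trace_mul_cycle, ← hA, hA1, one_mul, Matrix.trace_diagonal]
    simp [← hlam]
  have hT3 : (mRpow σ α).trace.re = ∑ j, mu j ^ α := by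
    rw [mRpow, dif_pos hσH, Matrix.trace_mul_cycle, ← hB, hB1, one_mul, Matrix.trace_diagonal]
    simp [← hmu]
  set c : Fin n → Fin n → ℝ := fun i j => Complex.normSq (W i j) with hc
  have hT1 : (ρ * mRpow σ (α - 1)).trace.re
      = ∑ i, ∑ j, lam i * mu j ^ (α - 1) * c i j := by
    conv_lhs => rw [hρH.spectral_theorem, Unitary.conjStarAlgAut_apply, mRpow, dif_pos hσH]
    rw [← hA, ← hB, ← hlam, ← hmu, trace_aux, ← hW]
    have : ∀ i j, (RCLike.ofReal ∘ lam) i * ((mu j ^ (α-1) : ℝ) : ℂ) * (W i j * star (W i j))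
        = ((lam i * mu j ^ (α - 1) * c i j : ℝ) : ℂ) := by
      intro i j
      rw [Complex.star_def, Complex.mul_conj, hc]
      simp only [Function.comp_apply, show ∀ x : ℝ, (RCLike.ofReal x : ℂ) = (x : ℂ) from fun _ => rfl]
      push_cast
      ring
    rw [trace_diag_mul,
      Finset.sum_congr rfl fun i _ => Finset.sum_congr rfl fun j _ => this i j,
      show (∑ i, ∑ j, ((lam i * mu j ^ (α - 1) * c i j : ℝ) : ℂ))
          = ((∑ i, ∑ j, lam i * mu j ^ (α - 1) * c i j : ℝ) : ℂ) from by push_cast; rfl,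
      Complex.ofReal_re]
  have hrow : ∀ i, ∑ j, c i j = 1 := by
    intro i
    have h1 : (W * star W) i i = 1 := by rw [hWu]; simp [Matrix.one_apply]
    rw [Matrix.mul_apply] at h1
    have h2 : ∀ j, W i j * (star W) j i = ((c i j : ℝ) : ℂ) := by
      intro j
      rw [Matrix.star_apply, Complex.star_def, Complex.mul_conj, hc]
    rw [Finset.sum_congr rfl fun j _ => h2 j] at h1
    have := congrArg Complex.re h1
    rwa [show (∑ j, ((c i j : ℝ) : ℂ)) = ((∑ j, c i j : ℝ) : ℂ) from by push_cast; rfl,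
      Complex.ofReal_re, Complex.one_re] at this
  have hcol : ∀ j, ∑ i, c i j = 1 := by
    intro j
    have h1 : (star W * W) j j = 1 := by rw [hWu']; simp [Matrix.one_apply]
    rw [Matrix.mul_apply] at h1
    have h2 : ∀ i, (star W) j i * W i j = ((c i j : ℝ) : ℂ) := by
      intro i
      rw [Matrix.star_apply, Complex.star_def, mul_comm, Complex.mul_conj, hc]
    rw [Finset.sum_congr rfl fun i _ => h2 i] at h1
    have := congrArg Complex.re h1
    rwa [show (∑ i, ((c i j : ℝ) : ℂ)) = ((∑ i, c i j : ℝ) : ℂ) from by push_cast; rfl,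
      Complex.ofReal_re, Complex.one_re] at this
  have h1α : (1 : ℝ) - α ≠ 0 := sub_ne_zero.mpr (fun h => hα1 h.symm)
  have hsum : Sbar α ρ σ = ∑ i, ∑ j, c i j *
      ((1 - α)⁻¹ * (α * (lam i * mu j ^ (α - 1)) - lam i ^ α + (1 - α) * mu j ^ α)) := by
    rw [Sbar, hT1, hT2, hT3]
    have e2 : (∑ i, lam i ^ α) = ∑ i, ∑ j, c i j * lam i ^ α := by
      refine Finset.sum_congr rfl fun i _ => ?_
      rw [← Finset.sum_mul, hrow i, one_mul]
    have e3 : (∑ j, mu j ^ α) = ∑ i, ∑ j, c i j * mu j ^ α := by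
      rw [Finset.sum_comm]
      refine Finset.sum_congr rfl fun j _ => ?_
      rw [← Finset.sum_mul, hcol j, one_mul]
    rw [e2, e3, Finset.mul_sum, Finset.mul_sum, ← Finset.sum_sub_distrib,
      ← Finset.sum_add_distrib]
    refine Finset.sum_congr rfl fun i _ => ?_
    rw [Finset.mul_sum, Finset.mul_sum, ← Finset.sum_sub_distrib, ← Finset.sum_add_distrib]
    refine Finset.sum_congr rfl fun j _ => ?_
    field_simp
  have hFkey : ∀ i j, 0 ≤ (1 - α)⁻¹ *
        (α * (lam i * mu j ^ (α - 1)) - lam i ^ α + (1 - α) * mu j ^ α) ∧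
      ((1 - α)⁻¹ * (α * (lam i * mu j ^ (α - 1)) - lam i ^ α + (1 - α) * mu j ^ α) = 0
        ↔ lam i = mu j) :=
    fun i j => key_scalar α hα hα1 (hρ.eigenvalues_nonneg i) (hσ.eigenvalues_pos j)
  have hc0 : ∀ i j, 0 ≤ c i j := fun i j => Complex.normSq_nonneg _
  have hterm : ∀ i j, 0 ≤ c i j *
      ((1 - α)⁻¹ * (α * (lam i * mu j ^ (α - 1)) - lam i ^ α + (1 - α) * mu j ^ α)) :=
    fun i j => mul_nonneg (hc0 i j) (hFkey i j).1
  have hnonneg : 0 ≤ Sbar α ρ σ := by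
    rw [hsum]
    exact Finset.sum_nonneg fun i _ => Finset.sum_nonneg fun j _ => hterm i j
  refine ⟨hnonneg, ?_, ?_⟩
  · -- Sbar = 0 → ρ = σ
    intro h
    rw [hsum] at h
    have hz : ∀ i ∈ Finset.univ, ∀ j ∈ Finset.univ, c i j *
        ((1 - α)⁻¹ * (α * (lam i * mu j ^ (α - 1)) - lam i ^ α + (1 - α) * mu j ^ α)) = 0 := by
      have h1 := (Finset.sum_eq_zero_iff_of_nonneg
        (fun i _ => Finset.sum_nonneg fun j _ => hterm i j)).mp h
      intro i hi
      exact (Finset.sum_eq_zero_iff_of_nonneg (fun j _ => hterm i j)).mp (h1 i hi)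
    have hcom : ∀ i j, W i j = 0 ∨ lam i = mu j := by
      intro i j
      rcases mul_eq_zero.mp (hz i (Finset.mem_univ i) j (Finset.mem_univ j)) with h0 | h0
      · left
        exact Complex.normSq_eq_zero.mp h0
      · right
        exact ((hFkey i j).2).mp h0
    have hDW : W * Matrix.diagonal (RCLike.ofReal ∘ mu)
        = Matrix.diagonal (RCLike.ofReal ∘ lam) * W := by
      ext i j
      rw [Matrix.mul_diagonal, Matrix.diagonal_mul]
      rcases hcom i j with h0 | h0
      · simp [h0]
      · simp only [Function.comp_apply, h0]
        ring
    have hBAW : B = A * W := by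
      rw [hW, ← mul_assoc, hA2, one_mul]
    have hWDW : W * Matrix.diagonal (RCLike.ofReal ∘ mu) * star W
        = Matrix.diagonal (RCLike.ofReal ∘ lam) := by
      rw [hDW, mul_assoc, hWu, mul_one]
    calc ρ = A * Matrix.diagonal (RCLike.ofReal ∘ lam) * star A := by
            rw [hA, hlam]; exact hρH.spectral_theorem
      _ = A * (W * Matrix.diagonal (RCLike.ofReal ∘ mu) * star W) * star A := by rw [hWDW]
      _ = (A * W) * Matrix.diagonal (RCLike.ofReal ∘ mu) * star (A * W) := by
            simp only [StarMul.star_mul, mul_assoc]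
      _ = B * Matrix.diagonal (RCLike.ofReal ∘ mu) * star B := by rw [← hBAW]
      _ = σ := by rw [hB, hmu]; exact hσH.spectral_theorem.symm
  · -- ρ = σ → Sbar = 0
    intro h
    subst h
    have hAB : A = B := rfl
    have hW1 : W = 1 := by rw [hW, hAB, hB1]
    have hlm : lam = mu := rfl
    rw [hsum]
    refine Finset.sum_eq_zero fun i _ => Finset.sum_eq_zero fun j _ => ?_
    by_cases hij : i = j
    · subst hij
      rw [(hFkey i i).2.mpr (by rw [hlm]), mul_zero]
    · have : c i j = 0 := by
        rw [hc]
        simp [hW1, Matrix.one_apply_ne hij]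
      rw [this, zero_mul]
end
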